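/- With Ψ⁻¹(A,B) := ∑_{j=0}^{B−1} A^j, let D ≥ 1, d : [D] → ℕ₊, 0 < r ≤ 1, and h : [D] → ℝ nondecreasing with h ≥ 0. For every U ∈ [D], the quantity C := ∑_{ℓ=1}^{D} h(ℓ) r^{d_{[ℓ+1:D]}} Ψ⁻¹(r, d(ℓ)) satisfies C ≥ R(U), where R(U) := ∑_{ℓ=1}^{U−1} h(ℓ) r^{d_{[ℓ+1:D]}} Ψ⁻¹(r, d(ℓ)) + h(U) Ψ⁻¹(r, d_{[U:D]}) and d_{[a:b]} := ∑_{t=a}^{b} d(t) (0 if a > b). -/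

import Mathlib

/-- `Ψ⁻¹(A, B) = ∑_{j=0}^{B−1} A^j`. -/
noncomputable def psiInv (A : ℝ) (B : ℕ) : ℝ := ∑ j ∈ Finset.range B, A ^ j

/-- `d_{[a:b]} = ∑_{t=a}^{b} d(t)` (0 if `a > b`). -/
def dSum (d : ℕ → ℕ) (a b : ℕ) : ℕ := ∑ t ∈ Finset.Icc a b, d t

lemma psiInv_add (r : ℝ) (a b : ℕ) :
    psiInv r (a + b) = psiInv r a + r ^ a * psiInv r b := by
  simp [psiInv, Finset.sum_range_add, Finset.mul_sum, pow_add]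

lemma psiInv_nonneg (r : ℝ) (hr0 : 0 ≤ r) (b : ℕ) : 0 ≤ psiInv r b := by
  unfold psiInv
  exact Finset.sum_nonneg fun j _ => pow_nonneg hr0 j

lemma psi_split (d : ℕ → ℕ) (r : ℝ) (D : ℕ) :
    ∀ n U, D + 1 - U = n →
      psiInv r (dSum d U D) = ∑ ℓ ∈ Finset.Icc U D, r ^ dSum d (ℓ + 1) D * psiInv r (d ℓ) := by
  intro n
  induction n with
  | zero =>
    intro U hn
    have hUD : D < U := by omega
    simp [dSum, Finset.Icc_eq_empty_of_lt hUD, psiInv]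
  | succ n ih =>
    intro U hn
    have hUD : U ≤ D := by omega
    have hins : Finset.Icc U D = insert U (Finset.Icc (U + 1) D) := by
      ext x; simp [Finset.mem_Icc]; omega
    have hds : dSum d U D = dSum d (U + 1) D + d U := by
      rw [dSum, dSum, hins, Finset.sum_insert (by simp)]
      ring
    rw [hds, psiInv_add, ih (U + 1) (by omega), hins,
      Finset.sum_insert (by simp)]
    ring

/-- Remark 3 (eq. (25)): for `h` nondecreasing and nonnegative on `[D]` and `0 < r ≤ 1`,
`C = ∑_{ℓ=1}^{D} h(ℓ) r^{d_{[ℓ+1:D]}} Ψ⁻¹(r,d(ℓ)) ≥ R(U)` for every `U ∈ [D]`. -/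
theorem stmt5 (D : ℕ) (hD : 1 ≤ D) (d : ℕ → ℕ)
    (hd : ∀ ℓ ∈ Finset.Icc 1 D, 1 ≤ d ℓ)
    (r : ℝ) (hr0 : 0 < r) (hr1 : r ≤ 1) (h : ℕ → ℝ)
    (hmono : ∀ i ∈ Finset.Icc 1 D, ∀ j ∈ Finset.Icc 1 D, i ≤ j → h i ≤ h j)
    (hpos : ∀ ℓ ∈ Finset.Icc 1 D, 0 ≤ h ℓ)
    (U : ℕ) (hU : U ∈ Finset.Icc 1 D) :
    ∑ ℓ ∈ Finset.Icc 1 (U - 1), h ℓ * r ^ dSum d (ℓ + 1) D * psiInv r (d ℓ)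
        + h U * psiInv r (dSum d U D)
      ≤ ∑ ℓ ∈ Finset.Icc 1 D, h ℓ * r ^ dSum d (ℓ + 1) D * psiInv r (d ℓ) := by
  obtain ⟨hU1, hUD⟩ := Finset.mem_Icc.mp hU
  have hsplit : ∑ ℓ ∈ Finset.Icc 1 D, h ℓ * r ^ dSum d (ℓ + 1) D * psiInv r (d ℓ)
      = ∑ ℓ ∈ Finset.Icc 1 (U - 1), h ℓ * r ^ dSum d (ℓ + 1) D * psiInv r (d ℓ)
        + ∑ ℓ ∈ Finset.Icc U D, h ℓ * r ^ dSum d (ℓ + 1) D * psiInv r (d ℓ) := by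
    have h1 : Finset.Icc 1 (U - 1) = Finset.Ioc 0 (U - 1) := by
      rw [← Finset.Icc_add_one_left_eq_Ioc, zero_add]
    have h2 : Finset.Icc U D = Finset.Ioc (U - 1) D := by
      rw [← Finset.Icc_add_one_left_eq_Ioc]
      congr 1
      omega
    have h3 : Finset.Icc 1 D = Finset.Ioc 0 D := by
      rw [← Finset.Icc_add_one_left_eq_Ioc, zero_add]
    rw [h1, h2, h3, ← Finset.sum_Ioc_consecutive _ (by omega : (0:ℕ) ≤ U - 1) (by omega)]
  rw [hsplit]
  gcongr
  rw [psi_split d r D (D + 1 - U) U rfl, Finset.mul_sum]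
  apply Finset.sum_le_sum
  intro ℓ hℓ
  obtain ⟨hℓU, hℓD⟩ := Finset.mem_Icc.mp hℓ
  have hmem : ℓ ∈ Finset.Icc 1 D := Finset.mem_Icc.mpr ⟨by omega, hℓD⟩
  have hfac : (0:ℝ) ≤ r ^ dSum d (ℓ + 1) D * psiInv r (d ℓ) :=
    mul_nonneg (pow_nonneg hr0.le _) (psiInv_nonneg r hr0.le _)
  have := hmono U hU ℓ hmem hℓU
  nlinarith [hpos U hU]
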